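/- Let S = {s_1, …, s_n} with 0 < s_1 < s_2 < … < s_n real numbers, n ≥ 1, and M = 1 + s_n. Let A be the two-clock timed automaton with additive constraints over Σ = {♦, ♠} described in the context, and let u = 2(M − s_n) ♦ 2(s_n − s_{n−1}) ♦ … ♦ 2(s_2 − s_1) ♦ 2s_1 be the timed word consisting of these n + 1 time spans interleaved with n occurrences of ♦. Then the set of clock valuations ν such that some run of A on the timed word u ♠ starts in the configuration (p_1, (x = 0, y = 0)) and ends in a configuration (q_1, ν) is exactly {(x = 2a, y = 0) : a ∈ S}. -/

import Mathlib

/-- Clock conditions with additive constraints: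
`γ ::= true | x < c | x > c | x = c | (Σ_{x∈Z} x) ∼ c | γ ∧ γ | γ ∨ γ`. -/
inductive ACond (X : Type) where
  | tt : ACond X
  | lt : X → ℝ → ACond X
  | gt : X → ℝ → ACond X
  | eq : X → ℝ → ACond X
  | sumLt : Finset X → ℝ → ACond X
  | sumGt : Finset X → ℝ → ACond X
  | sumEq : Finset X → ℝ → ACond X
  | conj : ACond X → ACond X → ACond X
  | disj : ACond X → ACond X → ACond X

/-- Satisfaction of an additive clock condition by a clock valuation. -/
def ACond.sat {X : Type} (ν : X → ℝ) : ACond X → Prop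
  | .tt => True
  | .lt x c => ν x < c
  | .gt x c => ν x > c
  | .eq x c => ν x = c
  | .sumLt Z c => ∑ x ∈ Z, ν x < c
  | .sumGt Z c => ∑ x ∈ Z, ν x > c
  | .sumEq Z c => ∑ x ∈ Z, ν x = c
  | .conj γ₁ γ₂ => γ₁.sat ν ∧ γ₂.sat ν
  | .disj γ₁ γ₂ => γ₁.sat ν ∨ γ₂.sat ν

/-- A timed automaton with additive constraints. -/
structure ATA (A Q X : Type) where
  I : Set Q
  E : Set (Q × A × ACond X × Q × Set X)
  F : Set Q

/-- One step of a timed automaton with additive constraints on a stream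
element. -/
def ATA.Step {A Q X : Type} (M : ATA A Q X) (e : A ⊕ ℝ)
    (c c' : Q × (X → ℝ)) : Prop :=
  match e with
  | .inr r => c'.1 = c.1 ∧ ∀ x, c'.2 x = c.2 x + r
  | .inl a => ∃ γ Z, (c.1, a, γ, c'.1, Z) ∈ M.E ∧ γ.sat c.2 ∧
      (∀ x ∈ Z, c'.2 x = 0) ∧ (∀ x ∉ Z, c'.2 x = c.2 x)

/-- A run of a timed automaton with additive constraints on a timed word. -/
inductive ATA.RunFrom {A Q X : Type} (M : ATA A Q X) :
    List (A ⊕ ℝ) → (Q × (X → ℝ)) → (Q × (X → ℝ)) → Prop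
  | nil (c) : M.RunFrom [] c c
  | cons {e w c c' c''} : M.Step e c c' → M.RunFrom w c' c'' →
      M.RunFrom (e :: w) c c''

/-- Acceptance of a timed word. -/
def ATA.Accepts {A Q X : Type} (M : ATA A Q X) (w : List (A ⊕ ℝ)) : Prop :=
  ∃ q₀ ∈ M.I, ∃ c' : Q × (X → ℝ), M.RunFrom w (q₀, fun _ => 0) c' ∧ c'.1 ∈ M.F

/-- The two-letter alphabet `{♦, ♠}`. -/
inductive Sig where
  | dia : Sig
  | spade : Sig

/-- The states of the 3SUM automaton. -/
inductive St where
  | p1 : St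
  | p2 : St
  | q1 : St
  | q2 : St
  | r1 : St
  | r2 : St

/-- The transitions of the 3SUM automaton, over clocks `Bool` with
`x = false` and `y = true`. -/
def threeSumE (M : ℝ) : Set (St × Sig × ACond Bool × St × Set Bool) :=
  {(St.p1, Sig.dia, ACond.tt, St.p1, (∅ : Set Bool)),
   (St.p1, Sig.dia, ACond.tt, St.p2, ({false} : Set Bool)),
   (St.p2, Sig.dia, ACond.tt, St.p2, (∅ : Set Bool)),
   (St.p2, Sig.spade, ACond.tt, St.q1, ({true} : Set Bool)),
   (St.q1, Sig.dia, ACond.tt, St.q1, (∅ : Set Bool)),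
   (St.q1, Sig.dia, ACond.tt, St.q2, ({true} : Set Bool)),
   (St.q2, Sig.dia, ACond.tt, St.q2, (∅ : Set Bool)),
   (St.q2, Sig.spade, ACond.tt, St.r1, (∅ : Set Bool)),
   (St.r1, Sig.dia, ACond.tt, St.r1, (∅ : Set Bool)),
   (St.r1, Sig.dia, ACond.sumEq Finset.univ (4 * M), St.r2, (∅ : Set Bool)),
   (St.r2, Sig.dia, ACond.tt, St.r2, (∅ : Set Bool))}

/-- The 3SUM automaton with parameter `M`: initial state `p₁`, final state
`r₂`. -/
def threeSumAut (M : ℝ) : ATA Sig St Bool :=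
  ⟨{St.p1}, threeSumE M, {St.r2}⟩

/-- The timed word `2(prev − s_n) ♦ 2(s_n − s_{n−1}) ♦ … ♦ 2(s_2 − s_1) ♦ 2s_1`
built from the descending list `[s_n, …, s_1]` and the starting value
`prev`. -/
def uFrom (prev : ℝ) : List ℝ → List (Sig ⊕ ℝ)
  | [] => [Sum.inr (2 * prev)]
  | s :: rest => Sum.inr (2 * (prev - s)) :: Sum.inl Sig.dia :: uFrom s rest

/-- The timed word `(prev − s_n) ♦ (s_n − s_{n−1}) ♦ … ♦ (s_2 − s_1) ♦` built
from the descending list `[s_n, …, s_1]` and the starting value `prev`. -/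
def vFrom (prev : ℝ) : List ℝ → List (Sig ⊕ ℝ)
  | [] => []
  | s :: rest => Sum.inr (prev - s) :: Sum.inl Sig.dia :: vFrom s rest

section Stmt14Aux

variable (M : ℝ)

lemma run_p2 : ∀ (rl : List ℝ) (prev : ℝ) (ν0 ν : Bool → ℝ),
    ν true = 0 → ν false = ν0 false + 2 * prev →
    (threeSumAut M).RunFrom (uFrom prev rl ++ [Sum.inl Sig.spade])
      (St.p2, ν0) (St.q1, ν) := by
  intro rl
  induction rl with
  | nil =>
    intro prev ν0 ν hT hF
    refine .cons (c' := (St.p2, fun x => ν0 x + 2 * prev)) ⟨rfl, fun x => rfl⟩ ?_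
    refine .cons (c' := (St.q1, ν)) ?_ (.nil _)
    refine ⟨ACond.tt, {true}, ?_, trivial, ?_, ?_⟩
    · simp [threeSumAut, threeSumE]
    · intro x hx; simp only [Set.mem_singleton_iff] at hx; subst hx; exact hT
    · intro x hx
      simp only [Set.mem_singleton_iff, Bool.not_eq_true] at hx
      subst hx; simpa using hF
  | cons s rest ih =>
    intro prev ν0 ν hT hF
    refine .cons (c' := (St.p2, fun x => ν0 x + 2 * (prev - s))) ⟨rfl, fun x => rfl⟩ ?_
    refine .cons (c' := (St.p2, fun x => ν0 x + 2 * (prev - s))) ?_ ?_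
    · exact ⟨ACond.tt, ∅, by simp [threeSumAut, threeSumE], trivial, by simp, fun x _ => rfl⟩
    · exact ih s _ ν hT (by rw [hF]; ring)

lemma run_p1 : ∀ (rl : List ℝ) (prev a : ℝ), a ∈ rl → ∀ (ν0 ν : Bool → ℝ),
    ν true = 0 → ν false = 2 * a →
    (threeSumAut M).RunFrom (uFrom prev rl ++ [Sum.inl Sig.spade])
      (St.p1, ν0) (St.q1, ν) := by
  intro rl
  induction rl with
  | nil => intro prev a ha; exact absurd ha List.not_mem_nil
  | cons s rest ih =>
    intro prev a ha ν0 ν hT hF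
    refine .cons (c' := (St.p1, fun x => ν0 x + 2 * (prev - s))) ⟨rfl, fun x => rfl⟩ ?_
    rcases List.mem_cons.mp ha with h | h
    · subst h
      refine .cons (c' := (St.p2, fun b => if b then ν0 true + 2 * (prev - a) else 0)) ?_ ?_
      · refine ⟨ACond.tt, {false}, by simp [threeSumAut, threeSumE], trivial, ?_, ?_⟩
        · intro x hx; simp only [Set.mem_singleton_iff] at hx; subst hx; simp
        · intro x hx
          simp only [Set.mem_singleton_iff, Bool.not_eq_false] at hx
          subst hx; simp
      · exact run_p2 M rest a _ ν hT (by simp [hF])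
    · refine .cons (c' := (St.p1, fun x => ν0 x + 2 * (prev - s))) ?_ (ih s a h _ ν hT hF)
      exact ⟨ACond.tt, ∅, by simp [threeSumAut, threeSumE], trivial, by simp, fun x _ => rfl⟩

lemma sound_p2 : ∀ (rl : List ℝ) (prev : ℝ) (ν0 ν : Bool → ℝ),
    (threeSumAut M).RunFrom (uFrom prev rl ++ [Sum.inl Sig.spade])
      (St.p2, ν0) (St.q1, ν) →
    ν true = 0 ∧ ν false = ν0 false + 2 * prev := by
  intro rl
  induction rl with
  | nil =>
    intro prev ν0 ν h
    cases h with
    | @cons _ _ _ c' _ hstep1 h =>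
      obtain ⟨q1, ν1⟩ := c'
      obtain ⟨hq1, hν1⟩ := hstep1
      cases h with
      | @cons _ _ _ c'' _ hstep2 h2 =>
        cases h2
        obtain ⟨γ, Z, hmem, _, hZ, hnZ⟩ := hstep2
        simp only at hq1
        subst hq1
        simp only [threeSumAut, threeSumE, Set.mem_insert_iff, Set.mem_singleton_iff,
          Prod.mk.injEq, reduceCtorEq, false_and, and_false, false_or, or_false, true_and, and_true] at hmem
        obtain ⟨-, hZeq⟩ := hmem
        subst hZeq
        refine ⟨hZ true rfl, ?_⟩
        have h3 : ν false = ν1 false := hnZ false (by simp)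
        have h4 : ν1 false = ν0 false + 2 * prev := hν1 false
        rw [h3, h4]
  | cons s rest ih =>
    intro prev ν0 ν h
    cases h with
    | @cons _ _ _ c' _ hstep1 h =>
      obtain ⟨q1, ν1⟩ := c'
      obtain ⟨hq1, hν1⟩ := hstep1
      cases h with
      | @cons _ _ _ c'' _ hstep2 h2 =>
        obtain ⟨q2, ν2⟩ := c''
        obtain ⟨γ, Z, hmem, _, hZ, hnZ⟩ := hstep2
        simp only at hq1
        subst hq1
        simp only [threeSumAut, threeSumE, Set.mem_insert_iff, Set.mem_singleton_iff,
          Prod.mk.injEq, reduceCtorEq, false_and, and_false, false_or, or_false, true_and, and_true] at hmem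
        obtain ⟨-, hq2, hZeq⟩ := hmem
        subst hq2; subst hZeq
        obtain ⟨hT, hF⟩ := ih s ν2 ν h2
        refine ⟨hT, ?_⟩
        have h3 : ν2 false = ν1 false := hnZ false (by simp)
        have h4 : ν1 false = ν0 false + 2 * (prev - s) := hν1 false
        rw [hF, h3, h4]; ring

lemma sound_p1 : ∀ (rl : List ℝ) (prev : ℝ) (ν0 ν : Bool → ℝ),
    (threeSumAut M).RunFrom (uFrom prev rl ++ [Sum.inl Sig.spade])
      (St.p1, ν0) (St.q1, ν) →
    ν true = 0 ∧ ∃ s ∈ rl, ν false = 2 * s := by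
  intro rl
  induction rl with
  | nil =>
    intro prev ν0 ν h
    cases h with
    | @cons _ _ _ c' _ hstep1 h =>
      obtain ⟨q1, ν1⟩ := c'
      obtain ⟨hq1, hν1⟩ := hstep1
      cases h with
      | @cons _ _ _ c'' _ hstep2 h2 =>
        cases h2
        obtain ⟨γ, Z, hmem, _, hZ, hnZ⟩ := hstep2
        simp only at hq1
        subst hq1
        simp only [threeSumAut, threeSumE, Set.mem_insert_iff, Set.mem_singleton_iff,
          Prod.mk.injEq, reduceCtorEq, false_and, and_false, false_or, or_false, true_and, and_true] at hmem
  | cons s rest ih =>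
    intro prev ν0 ν h
    cases h with
    | @cons _ _ _ c' _ hstep1 h =>
      obtain ⟨q1, ν1⟩ := c'
      obtain ⟨hq1, hν1⟩ := hstep1
      cases h with
      | @cons _ _ _ c'' _ hstep2 h2 =>
        obtain ⟨q2, ν2⟩ := c''
        obtain ⟨γ, Z, hmem, _, hZ, hnZ⟩ := hstep2
        simp only at hq1
        subst hq1
        simp only [threeSumAut, threeSumE, Set.mem_insert_iff, Set.mem_singleton_iff,
          Prod.mk.injEq, reduceCtorEq, false_and, and_false, false_or, or_false, true_and, and_true] at hmem
        rcases hmem with ⟨-, hq2, hZeq⟩ | ⟨-, hq2, hZeq⟩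
        · -- stayed in p1
          subst hq2; subst hZeq
          obtain ⟨hT, t, ht, hF⟩ := ih s ν2 ν h2
          exact ⟨hT, t, List.mem_cons_of_mem s ht, hF⟩
        · -- moved to p2, resetting x
          subst hq2; subst hZeq
          obtain ⟨hT, hF⟩ := sound_p2 M rest s ν2 ν h2
          refine ⟨hT, s, List.mem_cons_self, ?_⟩
          have h3 : ν2 false = 0 := hZ false rfl
          rw [hF, h3]; ring

end Stmt14Aux

/-- For `S = {s_1 < … < s_n}` (positive reals, given as the sorted list `l`),
`M = 1 + s_n`, and `u = 2(M − s_n) ♦ … ♦ 2(s_2 − s_1) ♦ 2s_1`, the clock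
valuations reachable from `(p₁, (0, 0))` at state `q₁` by a run of the 3SUM
automaton on `u ♠` are exactly `{(x = 2a, y = 0) : a ∈ S}`. -/
theorem stmt14 (l : List ℝ) (hne : l ≠ []) (hsort : l.Pairwise (· < ·))
    (hpos : ∀ x ∈ l, 0 < x) :
    {ν : Bool → ℝ |
        (threeSumAut (1 + l.getLast hne)).RunFrom
          (uFrom (1 + l.getLast hne) l.reverse ++ [Sum.inl Sig.spade])
          (St.p1, fun _ => 0) (St.q1, ν)} =
      {ν : Bool → ℝ | ∃ a ∈ l, ν false = 2 * a ∧ ν true = 0} := by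
  ext ν
  simp only [Set.mem_setOf_eq]
  constructor
  · intro h
    obtain ⟨hT, s, hs, hF⟩ := sound_p1 _ _ _ _ _ h
    exact ⟨s, List.mem_reverse.mp hs, hF, hT⟩
  · rintro ⟨a, ha, hF, hT⟩
    exact run_p1 _ l.reverse _ a (List.mem_reverse.mpr ha) _ ν hT hF
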